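/- arXiv:2307.16234 — 2 statements merged into one kernel-verified Lean document; each statement's English description precedes it below -/
import Mathlib

section
/- Suppose x ∈ 𝓞_K satisfies |N(x)| = p for a prime number p, and x divides ζ − ξ in 𝓞_K for some integer ξ. Then ξ^λ ≡ 1 (mod p). -/
open NumberField

noncomputable instance (n : ℕ+) : NumberField (CyclotomicField n ℚ) :=
  inferInstance

/-- If `x` has prime norm `p` and divides `ζ - ξ`, then `ξ ^ λ ≡ 1 (mod p)`. -/
theorem pow_congr_one_of_dvd_zeta_sub (l : ℕ+) (hl : (l : ℕ).Prime)
    (ζ : 𝓞 (CyclotomicField l ℚ)) (hζ : IsPrimitiveRoot ζ l)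
    (p : ℕ) (hp : p.Prime)
    (x : 𝓞 (CyclotomicField l ℚ))
    (hx : (Algebra.norm ℤ x).natAbs = p)
    (ξ : ℤ) (hdvd : x ∣ ζ - (ξ : 𝓞 (CyclotomicField l ℚ))) :
    ξ ^ (l : ℕ) ≡ 1 [ZMOD (p : ℤ)] := by
  have h1 : x ∣ ((1 - ξ ^ (l : ℕ) : ℤ) : 𝓞 (CyclotomicField l ℚ)) := by
    have := hdvd.trans (sub_dvd_pow_sub_pow ζ (ξ : 𝓞 (CyclotomicField l ℚ)) (l : ℕ))
    rw [hζ.pow_eq_one] at this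
    exact_mod_cast this
  have h2 : Algebra.norm ℤ x ∣
      Algebra.norm ℤ ((1 - ξ ^ (l : ℕ) : ℤ) : 𝓞 (CyclotomicField l ℚ)) :=
    map_dvd (Algebra.norm ℤ) h1
  rw [show ((1 - ξ ^ (l : ℕ) : ℤ) : 𝓞 (CyclotomicField l ℚ)) =
      algebraMap ℤ (𝓞 (CyclotomicField l ℚ)) (1 - ξ ^ (l : ℕ)) from rfl,
    Algebra.norm_algebraMap_of_basis (RingOfIntegers.basis (CyclotomicField l ℚ))] at h2
  have h3 : (p : ℤ) ∣ (1 - ξ ^ (l : ℕ)) ^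
      Fintype.card (Module.Free.ChooseBasisIndex ℤ (𝓞 (CyclotomicField l ℚ))) := by
    rw [← hx]
    exact (Int.natAbs_dvd).mpr h2
  have h4 : (p : ℤ) ∣ 1 - ξ ^ (l : ℕ) :=
    (Nat.prime_iff_prime_int.mp hp).dvd_of_dvd_pow h3
  exact (Int.modEq_iff_dvd).mpr h4
end

section
/- Let λ and q be distinct prime numbers, let f be the multiplicative order of q modulo λ (the order of the class of q in the unit group (ℤ/λℤ)ˣ), and let e = (λ−1)/f. Then in the ring of integers 𝓞_K of the λ-th cyclotomic field, any factorization of q into non-units has at most e factors: if q = x₁ · x₂ ⋯ x_k in 𝓞_K with no x_i a unit, then k ≤ e. -/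
open NumberField

set_option synthInstance.maxHeartbeats 400000 in
set_option maxHeartbeats 1000000 in
lemma kummer_key (l : ℕ+) (hl : (l : ℕ).Prime)
    (q : ℕ) (hq : q.Prime) (hql : q ≠ (l : ℕ))
    (u : (ZMod (l : ℕ))ˣ) (hu : (u : ZMod (l : ℕ)) = (q : ZMod (l : ℕ)))
    (P : Ideal (𝓞 (CyclotomicField l ℚ))) (hP : P.IsMaximal)
    (hqP : ((q : ℕ) : 𝓞 (CyclotomicField l ℚ)) ∈ P) :
    q ^ orderOf u ∣ Ideal.absNorm P := by
  haveI : Fact (l : ℕ).Prime := ⟨hl⟩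
  haveI : NeZero (l : ℕ) := ⟨l.ne_zero⟩
  haveI : NeZero ((l : ℕ) : ℚ) := ⟨by exact_mod_cast l.ne_zero⟩
  haveI : IsCyclotomicExtension {(l : ℕ)} ℚ (CyclotomicField l ℚ) :=
    CyclotomicField.isCyclotomicExtension (l : ℕ) ℚ
  have hPbot : P ≠ ⊥ := by
    intro h
    rw [h, Ideal.mem_bot] at hqP
    exact hq.ne_zero (by exact_mod_cast hqP)
  haveI := hP
  letI : Field (𝓞 (CyclotomicField l ℚ) ⧸ P) := Ideal.Quotient.field P
  letI : Fintype (𝓞 (CyclotomicField l ℚ) ⧸ P) := haveI := Ideal.finiteQuotientOfFreeOfNeBot P hPbot; Fintype.ofFinite _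
  have hq0 : ((q : ℕ) : 𝓞 (CyclotomicField l ℚ) ⧸ P) = 0 := by
    rw [← map_natCast (Ideal.Quotient.mk P), Ideal.Quotient.eq_zero_iff_mem]
    exact hqP
  haveI : CharP (𝓞 (CyclotomicField l ℚ) ⧸ P) q := (CharP.charP_iff_prime_eq_zero hq).mpr hq0
  obtain ⟨n, -, hcard⟩ := FiniteField.card (𝓞 (CyclotomicField l ℚ) ⧸ P) q
  -- the image of ζ in the residue field has order l
  have hζ := IsCyclotomicExtension.zeta_spec l ℚ (CyclotomicField l ℚ)
  have hz : IsPrimitiveRoot hζ.toInteger l := hζ.toInteger_isPrimitiveRoot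
  set z : 𝓞 (CyclotomicField l ℚ) ⧸ P := Ideal.Quotient.mk P hζ.toInteger with hzdef
  have hzpow : z ^ (l : ℕ) = 1 := by
    rw [hzdef, ← map_pow, hz.pow_eq_one, map_one]
  have hzne : z ≠ 1 := by
    intro h
    have hmem : hζ.toInteger - 1 ∈ P := by
      rw [← Ideal.Quotient.eq_zero_iff_mem, map_sub, map_one, ← hzdef, h, sub_self]
    have hdvd : hζ.toInteger - 1 ∣ ((l : ℕ) : 𝓞 (CyclotomicField l ℚ)) := by
      have := hζ.toInteger_sub_one_dvd_prime' (p := l)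
      exact_mod_cast this
    have hlP : ((l : ℕ) : 𝓞 (CyclotomicField l ℚ)) ∈ P := Ideal.mem_of_dvd P hdvd hmem
    -- coprimality gives 1 ∈ P
    have hcop : IsCoprime (q : ℤ) ((l : ℕ) : ℤ) :=
      Nat.isCoprime_iff_coprime.mpr ((Nat.coprime_primes hq hl).mpr hql)
    obtain ⟨a, b, hab⟩ := hcop
    have h1 : (1 : 𝓞 (CyclotomicField l ℚ)) ∈ P := by
      have := congrArg (algebraMap ℤ (𝓞 (CyclotomicField l ℚ))) hab
      push_cast at this
      rw [← this]
      exact P.add_mem (P.mul_mem_left _ hqP) (P.mul_mem_left _ hlP)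
    exact hP.ne_top (Ideal.eq_top_iff_one P |>.mpr h1)
  -- z is a unit of order l
  have hzu : IsUnit z := IsUnit.of_pow_eq_one hzpow l.pos.ne'
  have horder : orderOf z = (l : ℕ) := by
    have hdvd : orderOf z ∣ (l : ℕ) := orderOf_dvd_of_pow_eq_one hzpow
    rcases (Nat.dvd_prime hl).mp hdvd with h1 | h1
    · exact absurd (orderOf_eq_one_iff.mp h1) hzne
    · exact h1
  have horderu : orderOf hzu.unit = (l : ℕ) :=
    (orderOf_units.symm.trans (congrArg orderOf hzu.unit_spec)).trans horder
  have hldvd : (l : ℕ) ∣ Fintype.card (𝓞 (CyclotomicField l ℚ) ⧸ P) - 1 := by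
    have hh := orderOf_dvd_natCard hzu.unit
    rwa [horderu, Nat.card_units, Nat.card_eq_fintype_card] at hh
  -- translate to ZMod l
  have hqn1 : ((q : ZMod (l : ℕ))) ^ (n : ℕ) = 1 := by
    have h1le : 1 ≤ q ^ (n : ℕ) := Nat.one_le_pow _ _ hq.pos
    have : (q : ℕ) ^ (n : ℕ) - 1 + 1 = q ^ (n : ℕ) := Nat.sub_add_cancel h1le
    have hmod : ((q ^ (n : ℕ) : ℕ) : ZMod (l : ℕ)) = 1 := by
      rw [← this]
      push_cast
      rw [(ZMod.natCast_eq_zero_iff _ _).mpr (hcard ▸ hldvd)]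
      ring
    exact_mod_cast hmod
  have hun : u ^ (n : ℕ) = 1 := by
    ext
    push_cast
    rw [hu, hqn1]
  have hford : orderOf u ∣ (n : ℕ) := orderOf_dvd_of_pow_eq_one hun
  calc q ^ orderOf u ∣ q ^ (n : ℕ) := pow_dvd_pow q (Nat.le_of_dvd n.pos hford)
    _ = Ideal.absNorm P := by
        rw [Ideal.absNorm_apply, Submodule.cardQuot_apply,
          Nat.card_eq_fintype_card, hcard]

set_option synthInstance.maxHeartbeats 400000 in
set_option maxHeartbeats 1000000 in
/-- Kummer's bound: if `q` is a prime distinct from `λ` whose class modulo `λ` has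
multiplicative order `f`, and `e = (λ - 1) / f`, then any factorization of `q` into
non-units in the ring of integers of the `λ`-th cyclotomic field has at most `e` factors. -/
theorem factorization_card_le (l : ℕ+) (hl : (l : ℕ).Prime)
    (q : ℕ) (hq : q.Prime) (hql : q ≠ (l : ℕ))
    (u : (ZMod (l : ℕ))ˣ) (hu : (u : ZMod (l : ℕ)) = (q : ZMod (l : ℕ)))
    (f e : ℕ) (hf : orderOf u = f) (he : e = ((l : ℕ) - 1) / f)
    (k : ℕ) (x : Fin k → 𝓞 (CyclotomicField l ℚ))
    (hprod : (q : 𝓞 (CyclotomicField l ℚ)) = ∏ i, x i)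
    (hnu : ∀ i, ¬ IsUnit (x i)) :
    k ≤ e := by
  haveI : Fact (l : ℕ).Prime := ⟨hl⟩
  haveI : NeZero (l : ℕ) := ⟨l.ne_zero⟩
  haveI : NeZero ((l : ℕ) : ℚ) := ⟨by exact_mod_cast l.ne_zero⟩
  haveI : IsCyclotomicExtension {(l : ℕ)} ℚ (CyclotomicField l ℚ) :=
    CyclotomicField.isCyclotomicExtension (l : ℕ) ℚ
  have hf0 : 0 < f := hf ▸ orderOf_pos u
  -- rank of the ring of integers
  have hrank : Module.finrank ℤ (𝓞 (CyclotomicField l ℚ)) = (l : ℕ) - 1 := by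
    rw [NumberField.RingOfIntegers.rank,
      IsCyclotomicExtension.finrank (n := l) (CyclotomicField l ℚ)
        (Polynomial.cyclotomic.irreducible_rat l.pos),
      Nat.totient_prime hl]
  -- absolute norm of the ideal (q)
  have hnormq : Ideal.absNorm (Ideal.span {(q : 𝓞 (CyclotomicField l ℚ))})
      = q ^ ((l : ℕ) - 1) := by
    rw [Ideal.absNorm_span_singleton]
    have : ((q : ℕ) : 𝓞 (CyclotomicField l ℚ)) = algebraMap ℤ _ (q : ℤ) := by
      push_cast; rfl
    rw [this, Algebra.norm_algebraMap_of_basis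
      (Module.Free.chooseBasis ℤ (𝓞 (CyclotomicField l ℚ)))]
    rw [show Fintype.card (Module.Free.ChooseBasisIndex ℤ (𝓞 (CyclotomicField l ℚ)))
        = (l : ℕ) - 1 from (Module.finrank_eq_card_chooseBasisIndex ℤ _).symm.trans hrank]
    rw [Int.natAbs_pow]
    rfl
  -- the product of the norms of the factors
  have hprodnorm : ∏ i, Ideal.absNorm (Ideal.span {x i}) = q ^ ((l : ℕ) - 1) := by
    rw [← map_prod, Ideal.prod_span_singleton, ← hprod, hnormq]
  -- each factor's norm is divisible by q ^ f
  have hdvd : ∀ i, q ^ f ∣ Ideal.absNorm (Ideal.span {x i}) := by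
    intro i
    have hne : Ideal.span {x i} ≠ ⊤ := by
      rw [Ne, Ideal.span_singleton_eq_top]
      exact hnu i
    obtain ⟨P, hPmax, hle⟩ := Ideal.exists_le_maximal _ hne
    have hqP : ((q : ℕ) : 𝓞 (CyclotomicField l ℚ)) ∈ P := by
      apply hle
      rw [Ideal.mem_span_singleton, hprod]
      exact Finset.dvd_prod_of_mem x (Finset.mem_univ i)
    calc q ^ f = q ^ orderOf u := by rw [hf]
      _ ∣ Ideal.absNorm P := kummer_key l hl q hq hql u hu P hPmax hqP
      _ ∣ Ideal.absNorm (Ideal.span {x i}) := Ideal.absNorm_dvd_absNorm_of_le hle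
  -- hence q ^ (k * f) divides q ^ (l - 1)
  have hkf : q ^ (k * f) ∣ q ^ ((l : ℕ) - 1) := by
    have hpe : q ^ (k * f) = ∏ _i : Fin k, q ^ f := by
      rw [Finset.prod_const, Finset.card_univ, Fintype.card_fin, ← pow_mul, mul_comm]
    rw [hpe, ← hprodnorm]
    exact Finset.prod_dvd_prod_of_dvd _ _ fun i _ => hdvd i
  have hle : k * f ≤ (l : ℕ) - 1 :=
    (Nat.pow_dvd_pow_iff_le_right hq.one_lt).mp hkf
  rw [he]
  exact Nat.le_div_iff_mul_le hf0 |>.mpr hle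
end
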